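/- Let $\{Y_t\}_{t\geq 1}$ and $\{Z_t\}_{t\geq 1}$ be nonnegative real sequences, $m, q$ positive numbers with $q > m$, and $\rho, \alpha, \beta, \gamma, D$ positive constants with $\alpha m \leq 1/2$. Set $\eta_t := \gamma/(t+\beta)^\alpha$ and suppose $Y_{t+1} \leq Y_t - \rho \eta_t^m Z_t + D \eta_t^q$ for all $t \geq 1$. Suppose further $Y_t \leq C + H\log(t+\theta)$ for constants $C > 0$, $H \geq 0$, $\theta > 0$ with $1 + \theta - \beta > (1-\alpha m)e^{\alpha m/(1-\alpha m)}$, and that $\alpha(q-m) = 1$. Then for all $T \geq 1$: $\frac{1}{T}\sum_{t=1}^T Z_t \leq \frac{1}{T}\Big[\frac{(1+\beta)^{\alpha m} Y_1}{\rho\gamma^m} + \frac{C(T-1+\beta)^{\alpha m}}{2\rho\alpha m \gamma^m} + \frac{H(T-1+\beta)^{\alpha m}\log(T+\theta)}{2\rho\alpha m\gamma^m}\Big] + \frac{D\gamma^{q-m}}{\rho}\cdot\frac{\log(T+\beta)-\log(\beta)}{T}$. -/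

import Mathlib

set_option maxHeartbeats 1000000

open Real Finset

lemma bern_up {p : ℝ} (hp0 : 0 ≤ p) (hp1 : p ≤ 1) {x : ℝ} (hx : 0 < x) :
    (x + 1) ^ p ≤ x ^ p + p * x ^ (p - 1) := by
  have e : x + 1 = x * (1 + 1/x) := by field_simp
  have h1 : (1 + 1/x) ^ p ≤ 1 + p * (1/x) :=
    rpow_one_add_le_one_add_mul_self (by nlinarith [show (0:ℝ) ≤ 1/x by positivity]) hp0 hp1
  have h2 : x ^ (p - 1) = x ^ p / x := by rw [Real.rpow_sub hx, Real.rpow_one]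
  calc (x + 1) ^ p = x ^ p * (1 + 1/x) ^ p := by
        rw [e, Real.mul_rpow hx.le (by positivity)]
    _ ≤ x ^ p * (1 + p * (1/x)) :=
        mul_le_mul_of_nonneg_left h1 (Real.rpow_nonneg hx.le p)
    _ = x ^ p + p * (x ^ p / x) := by ring
    _ = x ^ p + p * x ^ (p - 1) := by rw [h2]

lemma bern_down {p : ℝ} (hp0 : 0 ≤ p) (hp1 : p ≤ 1) {x : ℝ} (hx : 1 ≤ x) :
    (x - 1) ^ p ≤ x ^ p - p * x ^ (p - 1) := by
  have hx0 : 0 < x := lt_of_lt_of_le one_pos hx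
  have e : x - 1 = x * (1 + (-1/x)) := by field_simp; ring
  have h1 : (1 + (-1/x)) ^ p ≤ 1 + p * (-1/x) := by
    apply rpow_one_add_le_one_add_mul_self _ hp0 hp1
    have : 1/x ≤ 1 := by rw [div_le_one hx0]; exact hx
    have : -1/x = -(1/x) := by ring
    rw [this]; linarith
  have h2 : x ^ (p - 1) = x ^ p / x := by rw [Real.rpow_sub hx0, Real.rpow_one]
  have hnn : 0 ≤ 1 + (-1/x) := by
    have : 1/x ≤ 1 := by rw [div_le_one hx0]; exact hx
    have e2 : -1/x = -(1/x) := by ring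
    rw [e2]; linarith
  calc (x - 1) ^ p = x ^ p * (1 + (-1/x)) ^ p := by
        rw [e, Real.mul_rpow hx0.le hnn]
    _ ≤ x ^ p * (1 + p * (-1/x)) :=
        mul_le_mul_of_nonneg_left h1 (Real.rpow_nonneg hx0.le p)
    _ = x ^ p - p * (x ^ p / x) := by ring
    _ = x ^ p - p * x ^ (p - 1) := by rw [h2]

lemma conc_step {p : ℝ} (hp0 : 0 ≤ p) (hp1 : p ≤ 1) {x : ℝ} (hx : 1 ≤ x) :
    (x + 1) ^ p - x ^ p ≤ x ^ p - (x - 1) ^ p := by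
  have h1 := bern_up hp0 hp1 (lt_of_lt_of_le one_pos hx)
  have h2 := bern_down hp0 hp1 hx
  linarith

lemma log_step {y : ℝ} (hy : 0 < y) : 1 / (y + 1) ≤ Real.log (y + 1) - Real.log y := by
  have h := Real.log_le_sub_one_of_pos (show 0 < y / (y + 1) by positivity)
  rw [Real.log_div hy.ne' (by positivity)] at h
  have e : y / (y + 1) - 1 = -(1 / (y + 1)) := by field_simp; ring
  linarith [e ▸ h]

theorem stmt5 (Y Z : ℕ → ℝ) (m q ρ α β γ D C H θ : ℝ) (η : ℕ → ℝ)
    (hm : 0 < m) (hqm : m < q) (hρ : 0 < ρ) (hα : 0 < α) (hβ : 0 < β) (hγ : 0 < γ)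
    (hD : 0 < D) (hC : 0 < C) (hH : 0 ≤ H) (hθ : 0 < θ)
    (hαm : α * m ≤ 1 / 2)
    (hθβ : (1 - α * m) * Real.exp (α * m / (1 - α * m)) < 1 + θ - β)
    (hαqm : α * (q - m) = 1)
    (hYnn : ∀ t : ℕ, 1 ≤ t → 0 ≤ Y t) (hZnn : ∀ t : ℕ, 1 ≤ t → 0 ≤ Z t)
    (hη : ∀ t : ℕ, η t = γ / ((t : ℝ) + β) ^ α)
    (hrec : ∀ t : ℕ, 1 ≤ t → Y (t + 1) ≤ Y t - ρ * η t ^ m * Z t + D * η t ^ q)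
    (hbound : ∀ t : ℕ, 1 ≤ t → Y t ≤ C + H * Real.log ((t : ℝ) + θ)) :
    ∀ T : ℕ, 1 ≤ T →
      (1 / (T : ℝ)) * ∑ t ∈ Finset.Icc 1 T, Z t ≤
        (1 / (T : ℝ)) * ((1 + β) ^ (α * m) * Y 1 / (ρ * γ ^ m)
          + C * ((T : ℝ) - 1 + β) ^ (α * m) / (2 * ρ * α * m * γ ^ m)
          + H * ((T : ℝ) - 1 + β) ^ (α * m) * Real.log ((T : ℝ) + θ) / (2 * ρ * α * m * γ ^ m))
        + (D * γ ^ (q - m) / ρ) * ((Real.log ((T : ℝ) + β) - Real.log β) / (T : ℝ)) := by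
  have hp0 : 0 < α * m := mul_pos hα hm
  have hp1 : α * m ≤ 1 := hαm.trans (by norm_num)
  have hγm : 0 < γ ^ m := Real.rpow_pos_of_pos hγ m
  have hργm : 0 < ρ * γ ^ m := mul_pos hρ hγm
  have hγqm : 0 < γ ^ (q - m) := Real.rpow_pos_of_pos hγ _
  -- per step bound
  have hstep : ∀ t : ℕ, 1 ≤ t → Z t ≤
      (Y t - Y (t + 1)) * ((t : ℝ) + β) ^ (α * m) / (ρ * γ ^ m)
        + (D * γ ^ (q - m) / ρ) * (1 / ((t : ℝ) + β)) := by
    intro t ht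
    have hx : (0 : ℝ) < (t : ℝ) + β := by positivity
    have hxp : (0 : ℝ) < ((t : ℝ) + β) ^ (α * m) := Real.rpow_pos_of_pos hx _
    have hηm : η t ^ m = γ ^ m / ((t : ℝ) + β) ^ (α * m) := by
      rw [hη t, Real.div_rpow hγ.le (Real.rpow_nonneg hx.le α), ← Real.rpow_mul hx.le]
    have hαq : α * q = α * m + 1 := by
      have : α * q = α * m + α * (q - m) := by ring
      rw [this, hαqm]
    have hηq : η t ^ q = γ ^ q / (((t : ℝ) + β) ^ (α * m) * ((t : ℝ) + β)) := by
      rw [hη t, Real.div_rpow hγ.le (Real.rpow_nonneg hx.le α), ← Real.rpow_mul hx.le,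
        hαq, Real.rpow_add hx, Real.rpow_one]
    have hrec' := hrec t ht
    rw [hηm, hηq] at hrec'
    have key : ρ * γ ^ m * Z t ≤ (Y t - Y (t + 1)) * ((t : ℝ) + β) ^ (α * m)
        + D * γ ^ q / ((t : ℝ) + β) := by
      have h2 : ρ * (γ ^ m / ((t : ℝ) + β) ^ (α * m)) * Z t ≤ (Y t - Y (t + 1))
          + D * (γ ^ q / (((t : ℝ) + β) ^ (α * m) * ((t : ℝ) + β))) := by linarith
      calc ρ * γ ^ m * Z t
          = ρ * (γ ^ m / ((t : ℝ) + β) ^ (α * m)) * Z t * ((t : ℝ) + β) ^ (α * m) := by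
            field_simp
        _ ≤ ((Y t - Y (t + 1)) + D * (γ ^ q / (((t : ℝ) + β) ^ (α * m) * ((t : ℝ) + β))))
            * ((t : ℝ) + β) ^ (α * m) := mul_le_mul_of_nonneg_right h2 hxp.le
        _ = (Y t - Y (t + 1)) * ((t : ℝ) + β) ^ (α * m) + D * γ ^ q / ((t : ℝ) + β) := by
            field_simp
    have hγq : γ ^ (q - m) = γ ^ q / γ ^ m := Real.rpow_sub hγ q m
    rw [hγq]
    calc Z t = (ρ * γ ^ m * Z t) / (ρ * γ ^ m) := by field_simp
      _ ≤ ((Y t - Y (t + 1)) * ((t : ℝ) + β) ^ (α * m) + D * γ ^ q / ((t : ℝ) + β))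
          / (ρ * γ ^ m) := by gcongr
      _ = (Y t - Y (t + 1)) * ((t : ℝ) + β) ^ (α * m) / (ρ * γ ^ m)
          + D * (γ ^ q / γ ^ m) / ρ * (1 / ((t : ℝ) + β)) := by field_simp
  -- Abel / summation-by-parts bound
  have habel : ∀ T : ℕ, 1 ≤ T →
      ∑ t ∈ Finset.Icc 1 T, (Y t - Y (t + 1)) * ((t : ℝ) + β) ^ (α * m) ≤
        (1 + β) ^ (α * m) * Y 1 - Y (T + 1) * ((T : ℝ) + β) ^ (α * m)
          + (C + H * Real.log ((T : ℝ) + θ)) * (((T : ℝ) - 1 + β) ^ (α * m) - β ^ (α * m)) := by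
    intro T hT
    induction T, hT using Nat.le_induction with
    | base =>
      rw [Finset.Icc_self, Finset.sum_singleton]
      have e1 : ((1 : ℕ) : ℝ) = 1 := by norm_num
      rw [e1]
      have e2 : (1 : ℝ) - 1 + β = β := by ring
      rw [e2]
      have : (C + H * Real.log (1 + θ)) * (β ^ (α * m) - β ^ (α * m)) = 0 := by ring
      rw [this]
      linarith [le_refl ((Y 1 - Y 2) * (1 + β) ^ (α * m))]
    | succ n hn ih =>
      rw [Finset.sum_Icc_succ_top (by omega : 1 ≤ n + 1)]
      push_cast
      have e1 : (n : ℝ) + 1 - 1 + β = (n : ℝ) + β := by ring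
      rw [e1]
      have hn1 : (1 : ℝ) ≤ (n : ℝ) := by exact_mod_cast hn
      have hL : C + H * Real.log ((n : ℝ) + θ) ≤ C + H * Real.log ((n : ℝ) + 1 + θ) := by
        have hlg : Real.log ((n : ℝ) + θ) ≤ Real.log ((n : ℝ) + 1 + θ) :=
          Real.log_le_log (by positivity) (by linarith)
        nlinarith
      have hL'nn : 0 ≤ C + H * Real.log ((n : ℝ) + 1 + θ) := by
        have : 0 ≤ Real.log ((n : ℝ) + 1 + θ) := Real.log_nonneg (by linarith)
        nlinarith
      have hYb : Y (n + 1) ≤ C + H * Real.log ((n : ℝ) + 1 + θ) := by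
        have := hbound (n + 1) (by omega)
        push_cast at this; exact this
      have hY0 : 0 ≤ Y (n + 1) := hYnn (n + 1) (by omega)
      have h5 : ((n : ℝ) + 1 + β) ^ (α * m) - ((n : ℝ) + β) ^ (α * m) ≤
          ((n : ℝ) + β) ^ (α * m) - ((n : ℝ) - 1 + β) ^ (α * m) := by
        have h := conc_step hp0.le hp1 (x := (n : ℝ) + β) (by linarith)
        have e2 : (n : ℝ) + β + 1 = (n : ℝ) + 1 + β := by ring
        have e3 : (n : ℝ) + β - 1 = (n : ℝ) - 1 + β := by ring
        rw [e2, e3] at h; exact h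
      have h6 : ((n : ℝ) + β) ^ (α * m) ≤ ((n : ℝ) + 1 + β) ^ (α * m) :=
        Real.rpow_le_rpow (by positivity) (by linarith) hp0.le
      have h7 : β ^ (α * m) ≤ ((n : ℝ) - 1 + β) ^ (α * m) :=
        Real.rpow_le_rpow hβ.le (by linarith) hp0.le
      have h8 : Y (n + 1) * (((n : ℝ) + 1 + β) ^ (α * m) - ((n : ℝ) + β) ^ (α * m)) ≤
          (C + H * Real.log ((n : ℝ) + 1 + θ)) *
            (((n : ℝ) + β) ^ (α * m) - ((n : ℝ) - 1 + β) ^ (α * m)) :=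
        le_trans (mul_le_mul_of_nonneg_right hYb (by linarith))
          (mul_le_mul_of_nonneg_left h5 hL'nn)
      have h9 : (C + H * Real.log ((n : ℝ) + θ)) *
            (((n : ℝ) - 1 + β) ^ (α * m) - β ^ (α * m)) ≤
          (C + H * Real.log ((n : ℝ) + 1 + θ)) *
            (((n : ℝ) - 1 + β) ^ (α * m) - β ^ (α * m)) :=
        mul_le_mul_of_nonneg_right hL (by linarith)
      nlinarith [ih]
  -- harmonic-like sum bound
  have hlogsum : ∀ T : ℕ, 1 ≤ T →
      ∑ t ∈ Finset.Icc 1 T, 1 / ((t : ℝ) + β) ≤ Real.log ((T : ℝ) + β) - Real.log β := by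
    intro T hT
    induction T, hT using Nat.le_induction with
    | base =>
      rw [Finset.Icc_self, Finset.sum_singleton]
      have h := log_step hβ
      have e : β + 1 = ((1 : ℕ) : ℝ) + β := by push_cast; ring
      rw [e] at h
      exact h
    | succ n hn ih =>
      rw [Finset.sum_Icc_succ_top (by omega : 1 ≤ n + 1)]
      have hx : (0 : ℝ) < (n : ℝ) + β := by positivity
      have h := log_step hx
      have e : (n : ℝ) + β + 1 = ((n : ℕ) + 1 : ℕ) + β := by push_cast; ring
      rw [e] at h
      push_cast at h ⊢
      linarith
  -- assembly
  intro T hT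
  have hT1 : (1 : ℝ) ≤ (T : ℝ) := by exact_mod_cast hT
  have hTpos : (0 : ℝ) < (T : ℝ) := by linarith
  have hsumZ : ∑ t ∈ Finset.Icc 1 T, Z t ≤
      (∑ t ∈ Finset.Icc 1 T, (Y t - Y (t + 1)) * ((t : ℝ) + β) ^ (α * m)) / (ρ * γ ^ m)
        + (D * γ ^ (q - m) / ρ) * ∑ t ∈ Finset.Icc 1 T, 1 / ((t : ℝ) + β) := by
    rw [Finset.sum_div, Finset.mul_sum, ← Finset.sum_add_distrib]
    apply Finset.sum_le_sum
    intro t ht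
    exact hstep t (Finset.mem_Icc.mp ht).1
  have hlogTθ : 0 ≤ Real.log ((T : ℝ) + θ) := Real.log_nonneg (by linarith)
  have hvT : 0 ≤ ((T : ℝ) - 1 + β) ^ (α * m) := Real.rpow_nonneg (by linarith) _
  have hS1 : ∑ t ∈ Finset.Icc 1 T, (Y t - Y (t + 1)) * ((t : ℝ) + β) ^ (α * m) ≤
      (1 + β) ^ (α * m) * Y 1
        + (C + H * Real.log ((T : ℝ) + θ)) * ((T : ℝ) - 1 + β) ^ (α * m) := by
    have h := habel T hT
    have h1 : 0 ≤ Y (T + 1) * ((T : ℝ) + β) ^ (α * m) :=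
      mul_nonneg (hYnn _ (by omega)) (Real.rpow_nonneg (by positivity) _)
    have h2 : 0 ≤ C + H * Real.log ((T : ℝ) + θ) := by nlinarith
    have h3 : 0 ≤ β ^ (α * m) := Real.rpow_nonneg hβ.le _
    nlinarith
  have hfinal : ∑ t ∈ Finset.Icc 1 T, Z t ≤
      ((1 + β) ^ (α * m) * Y 1
        + (C + H * Real.log ((T : ℝ) + θ)) * ((T : ℝ) - 1 + β) ^ (α * m)) / (ρ * γ ^ m)
        + (D * γ ^ (q - m) / ρ) * (Real.log ((T : ℝ) + β) - Real.log β) := by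
    refine hsumZ.trans (add_le_add ?_ ?_)
    · gcongr
    · exact mul_le_mul_of_nonneg_left (hlogsum T hT) (by positivity)
  have hinner : ((1 + β) ^ (α * m) * Y 1
        + (C + H * Real.log ((T : ℝ) + θ)) * ((T : ℝ) - 1 + β) ^ (α * m)) / (ρ * γ ^ m) ≤
      (1 + β) ^ (α * m) * Y 1 / (ρ * γ ^ m)
        + C * ((T : ℝ) - 1 + β) ^ (α * m) / (2 * ρ * α * m * γ ^ m)
        + H * ((T : ℝ) - 1 + β) ^ (α * m) * Real.log ((T : ℝ) + θ)
          / (2 * ρ * α * m * γ ^ m) := by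
    have h2am : 0 < 2 * ρ * α * m * γ ^ m := by positivity
    have e1 : ((1 + β) ^ (α * m) * Y 1
        + (C + H * Real.log ((T : ℝ) + θ)) * ((T : ℝ) - 1 + β) ^ (α * m)) / (ρ * γ ^ m)
        = (1 + β) ^ (α * m) * Y 1 / (ρ * γ ^ m)
          + ((C + H * Real.log ((T : ℝ) + θ)) * ((T : ℝ) - 1 + β) ^ (α * m)) * (2 * α * m)
            / (2 * ρ * α * m * γ ^ m) := by
      field_simp
    rw [e1]
    have e2 : C * ((T : ℝ) - 1 + β) ^ (α * m) / (2 * ρ * α * m * γ ^ m)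
        + H * ((T : ℝ) - 1 + β) ^ (α * m) * Real.log ((T : ℝ) + θ) / (2 * ρ * α * m * γ ^ m)
        = (C * ((T : ℝ) - 1 + β) ^ (α * m)
            + H * ((T : ℝ) - 1 + β) ^ (α * m) * Real.log ((T : ℝ) + θ))
          / (2 * ρ * α * m * γ ^ m) := by ring
    rw [add_assoc, e2]
    apply add_le_add (le_refl _)
    rw [div_le_div_iff_of_pos_right h2am]
    nlinarith [mul_nonneg (mul_nonneg hH hvT) hlogTθ, mul_nonneg hC.le hvT,
      mul_nonneg (mul_nonneg hH hlogTθ) hvT]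
  have hmul := mul_le_mul_of_nonneg_left (hfinal.trans (add_le_add hinner (le_refl _)))
    (by positivity : (0 : ℝ) ≤ 1 / (T : ℝ))
  calc (1 / (T : ℝ)) * ∑ t ∈ Finset.Icc 1 T, Z t
      ≤ (1 / (T : ℝ)) * (((1 + β) ^ (α * m) * Y 1 / (ρ * γ ^ m)
          + C * ((T : ℝ) - 1 + β) ^ (α * m) / (2 * ρ * α * m * γ ^ m)
          + H * ((T : ℝ) - 1 + β) ^ (α * m) * Real.log ((T : ℝ) + θ)
            / (2 * ρ * α * m * γ ^ m))
          + (D * γ ^ (q - m) / ρ) * (Real.log ((T : ℝ) + β) - Real.log β)) := hmul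
    _ = (1 / (T : ℝ)) * ((1 + β) ^ (α * m) * Y 1 / (ρ * γ ^ m)
          + C * ((T : ℝ) - 1 + β) ^ (α * m) / (2 * ρ * α * m * γ ^ m)
          + H * ((T : ℝ) - 1 + β) ^ (α * m) * Real.log ((T : ℝ) + θ)
            / (2 * ρ * α * m * γ ^ m))
        + (D * γ ^ (q - m) / ρ) * ((Real.log ((T : ℝ) + β) - Real.log β) / (T : ℝ)) := by
      ring
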